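/- Let n ≥ 4 be divisible by 4, let γ := ∏_{i=1}^{n/2} (i, n/2+i) ∈ S_n, and let A be an independent set of B_{n/2} consisting only of even permutations. Let A' := {(σ, σ⁻¹τ) : σ ∈ S_{n/2}, τ ∈ A} ⊆ S_{n/2} × S_{n/2} ⊆ S_n. Then A' ∪ γA' is an independent set of B_n consisting only of even permutations, and |A' ∪ γA'| = 2·(n/2)!·|A|. -/

import Mathlib

open Equiv Finset

private lemma permCongr_mul {α β : Type*} (e : α ≃ β) (p q : Equiv.Perm α) :
    e.permCongr p * e.permCongr q = e.permCongr (p * q) := by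
  ext x; simp [Equiv.Perm.mul_apply]

private lemma permCongr_inv {α β : Type*} (e : α ≃ β) (p : Equiv.Perm α) :
    (e.permCongr p)⁻¹ = e.permCongr p⁻¹ := by
  rw [inv_eq_iff_mul_eq_one, _root_.permCongr_mul, mul_inv_cancel]
  ext x; simp

private lemma permCongr_zpow {α β : Type*} (e : α ≃ β) (p : Equiv.Perm α) (k : ℤ) :
    (e.permCongr p) ^ k = e.permCongr (p ^ k) := by
  induction k using Int.induction_on with
  | zero => simp; ext x; simp
  | succ i ih => rw [zpow_add_one, ih, zpow_add_one, _root_.permCongr_mul]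
  | pred i ih => rw [zpow_sub_one, ih, zpow_sub_one, permCongr_inv, _root_.permCongr_mul]

private lemma isCycle_permCongr {α β : Type*} (e : α ≃ β) {p : Equiv.Perm α}
    (h : (e.permCongr p).IsCycle) : p.IsCycle := by
  obtain ⟨x, hx, hall⟩ := h
  refine ⟨e.symm x, fun hc => hx (by simp [hc]), fun y hy => ?_⟩
  obtain ⟨k, hk⟩ := hall (y := e y) (by simp [hy])
  refine ⟨k, ?_⟩
  rw [permCongr_zpow] at hk
  simpa using hk

private lemma isCycle_sumCongr {α β : Type*} {a : Equiv.Perm α} {b : Equiv.Perm β}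
    (h : Equiv.Perm.IsCycle (Equiv.sumCongr a b)) :
    (a.IsCycle ∧ b = 1) ∨ (a = 1 ∧ b.IsCycle) := by
  have hz : ∀ (k : ℤ), (Equiv.sumCongr a b : Equiv.Perm (α ⊕ β)) ^ k = Equiv.sumCongr (a ^ k) (b ^ k) := by
    intro k
    have h1 := map_zpow (Equiv.Perm.sumCongrHom α β) (a, b) k
    simpa [Equiv.Perm.sumCongrHom, Prod.pow_def] using h1.symm
  obtain ⟨x, hx, hall⟩ := h
  rcases x with x | x
  · have hb : b = 1 := by
      ext y
      by_contra hy
      obtain ⟨k, hk⟩ := hall (y := Sum.inr y) (by simpa using hy)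
      rw [hz] at hk
      simp at hk
    refine Or.inl ⟨⟨x, by simpa using hx, fun y hy => ?_⟩, hb⟩
    obtain ⟨k, hk⟩ := hall (y := Sum.inl y) (by simpa using hy)
    rw [hz] at hk
    exact ⟨k, by simpa using hk⟩
  · have ha : a = 1 := by
      ext y
      by_contra hy
      obtain ⟨k, hk⟩ := hall (y := Sum.inl y) (by simpa using hy)
      rw [hz] at hk
      simp at hk
    refine Or.inr ⟨ha, ⟨x, by simpa using hx, fun y hy => ?_⟩⟩
    obtain ⟨k, hk⟩ := hall (y := Sum.inr y) (by simpa using hy)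
    rw [hz] at hk
    exact ⟨k, by simpa using hk⟩

private lemma sign_of_fpf_cycle {α : Type*} [DecidableEq α] [Fintype α] {f : Equiv.Perm α}
    (hf : f.IsCycle) (h : ∀ x, f x ≠ x) :
    Equiv.Perm.sign f = -(-1) ^ (Fintype.card α) := by
  have hs : f.support = Finset.univ := by
    ext x; simp [Equiv.Perm.mem_support, h x]
  rw [hf.sign, hs, Finset.card_univ]

private lemma swapProd_apply {α : Type*} [DecidableEq α] (l : List α) (hl : l.Nodup) (j : α) :
    ((l.map fun i => Equiv.swap (Sum.inl i) (Sum.inr i)).prod (Sum.inl j)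
      = if j ∈ l then (Sum.inr j : α ⊕ α) else Sum.inl j) ∧
    ((l.map fun i => Equiv.swap (Sum.inl i) (Sum.inr i)).prod (Sum.inr j)
      = if j ∈ l then (Sum.inl j : α ⊕ α) else Sum.inr j) := by
  induction l with
  | nil => simp
  | cons i t ih =>
    obtain ⟨hit, ht⟩ := List.nodup_cons.mp hl
    obtain ⟨ih1, ih2⟩ := ih ht
    rw [List.map_cons, List.prod_cons]
    rw [Equiv.Perm.mul_apply, Equiv.Perm.mul_apply, ih1, ih2]
    by_cases hjt : j ∈ t
    · have hji : j ≠ i := fun h => hit (h ▸ hjt)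
      simp [hjt, hji, List.mem_cons, Equiv.swap_apply_of_ne_of_ne]
    · rcases eq_or_ne j i with rfl | hji
      · simp [hjt]
      · simp [hjt, hji, List.mem_cons, Equiv.swap_apply_of_ne_of_ne]

private lemma sumComm_eq_prod {α : Type*} [Fintype α] [DecidableEq α] :
    (Equiv.sumComm α α : Equiv.Perm (α ⊕ α)) =
      ((Finset.univ.toList.map fun i => Equiv.swap (Sum.inl i) (Sum.inr i)).prod) := by
  ext x
  rcases x with j | j
  · rw [(swapProd_apply _ Finset.univ.nodup_toList j).1]
    simp [Finset.mem_toList]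
  · rw [(swapProd_apply _ Finset.univ.nodup_toList j).2]
    simp [Finset.mem_toList]

private lemma sign_sumComm {α : Type*} [Fintype α] [DecidableEq α] :
    Equiv.Perm.sign (Equiv.sumComm α α : Equiv.Perm (α ⊕ α)) = (-1) ^ (Fintype.card α) := by
  rw [sumComm_eq_prod, Equiv.Perm.sign_prod_list_swap, List.length_map,
    Finset.length_toList, Finset.card_univ]
  intro g hg
  obtain ⟨i, _, rfl⟩ := List.mem_map.mp hg
  exact ⟨Sum.inl i, Sum.inr i, by simp, rfl⟩

private lemma sumComm_inv {α : Type*} :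
    (Equiv.sumComm α α : Equiv.Perm (α ⊕ α))⁻¹ = Equiv.sumComm α α := by
  ext x; rcases x with j | j <;> rfl

private lemma sumComm_conj {α : Type*} (a b : Equiv.Perm α) :
    (Equiv.sumComm α α : Equiv.Perm (α ⊕ α)) * Equiv.sumCongr a b * Equiv.sumComm α α
      = Equiv.sumCongr b a := by
  ext x; rcases x with j | j <;> simp [Equiv.Perm.mul_apply]

private lemma block_not_cycle {α : Type*} {σ₁ σ₂ τ₁ τ₂ : Equiv.Perm α}
    (hne : ¬ (τ₁ * τ₂⁻¹).IsCycle) :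
    ¬ Equiv.Perm.IsCycle (Equiv.sumCongr (σ₁ * σ₂⁻¹) (σ₁⁻¹ * (τ₁ * τ₂⁻¹) * σ₂)) ∧
    ¬ Equiv.Perm.IsCycle (Equiv.sumCongr (σ₁⁻¹ * (τ₁ * τ₂⁻¹) * σ₂) (σ₁ * σ₂⁻¹)) := by
  have main : ∀ (h : (σ₁ * σ₂⁻¹).IsCycle ∧ σ₁⁻¹ * (τ₁ * τ₂⁻¹) * σ₂ = 1) , False := by
    rintro ⟨h1, h2⟩
    apply hne
    have : τ₁ * τ₂⁻¹ = σ₁ * σ₂⁻¹ := by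
      calc τ₁ * τ₂⁻¹ = σ₁ * (σ₁⁻¹ * (τ₁ * τ₂⁻¹) * σ₂) * σ₂⁻¹ := by group
        _ = σ₁ * σ₂⁻¹ := by rw [h2]; group
    rw [this]; exact h1
  have main2 : ∀ (h : σ₁ * σ₂⁻¹ = 1 ∧ (σ₁⁻¹ * (τ₁ * τ₂⁻¹) * σ₂).IsCycle), False := by
    rintro ⟨h1, h2⟩
    apply hne
    obtain rfl : σ₁ = σ₂ := mul_inv_eq_one.mp h1
    have heq : σ₁⁻¹ * (τ₁ * τ₂⁻¹) * σ₁ = (σ₁⁻¹ : Equiv.Perm α).permCongr (τ₁ * τ₂⁻¹) := by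
      rw [Equiv.permCongr_eq_mul, inv_inv]
    rw [heq] at h2
    exact isCycle_permCongr _ h2
  constructor <;> intro hc
  · rcases isCycle_sumCongr hc with h | h
    · exact main h
    · exact main2 h
  · rcases isCycle_sumCongr hc with h | h
    · exact main2 ⟨h.2, h.1⟩
    · exact main ⟨h.2, h.1⟩

private lemma mixed_not_cycle {α : Type*} [Fintype α] [DecidableEq α]
    (hcard : Even (Fintype.card α)) {a b : Equiv.Perm α}
    (h1 : Equiv.Perm.sign a * Equiv.Perm.sign b = 1) :
    ¬ Equiv.Perm.IsCycle (Equiv.sumCongr a b * Equiv.sumComm α α) ∧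
    ¬ Equiv.Perm.IsCycle ((Equiv.sumComm α α : Equiv.Perm (α ⊕ α)) * Equiv.sumCongr a b) := by
  have hcs : Equiv.Perm.sign (Equiv.sumComm α α : Equiv.Perm (α ⊕ α)) = 1 := by
    rw [sign_sumComm]; exact Even.neg_one_pow hcard
  have hsum : Fintype.card (α ⊕ α) = Fintype.card α + Fintype.card α := Fintype.card_sum
  have heven : Even (Fintype.card (α ⊕ α)) := by rw [hsum]; exact ⟨_, rfl⟩
  constructor <;> intro hc
  · have hf : ∀ x, (Equiv.sumCongr a b * Equiv.sumComm α α : Equiv.Perm (α ⊕ α)) x ≠ x := by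
      intro x; rcases x with j | j <;> simp [Equiv.Perm.mul_apply]
    have hsgn := sign_of_fpf_cycle hc hf
    rw [Even.neg_one_pow heven, map_mul, Equiv.Perm.sign_sumCongr, h1, hcs] at hsgn
    simp at hsgn
  · have hf : ∀ x, ((Equiv.sumComm α α : Equiv.Perm (α ⊕ α)) * Equiv.sumCongr a b) x ≠ x := by
      intro x; rcases x with j | j <;> simp [Equiv.Perm.mul_apply]
    have hsgn := sign_of_fpf_cycle hc hf
    rw [Even.neg_one_pow heven, map_mul, Equiv.Perm.sign_sumCongr, hcs] at hsgn
    rw [one_mul, h1] at hsgn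
    simp at hsgn

/-- `A` is an independent set of the Birkhoff graph `B_m`: no two of its elements differ
by a single cycle. -/
def IsIndep {m : ℕ} (A : Finset (Equiv.Perm (Fin m))) : Prop :=
  ∀ σ ∈ A, ∀ τ ∈ A, ¬ (σ * τ⁻¹).IsCycle

/-- improved independent set construction when `4 ∣ n`. -/
theorem stmt14 (n : ℕ) (hn4 : 4 ∣ n) (hn : 4 ≤ n)
    (A : Finset (Equiv.Perm (Fin (n / 2))))
    (hsign : ∀ τ ∈ A, Equiv.Perm.sign τ = 1)
    (hind : IsIndep A) :
    let e : Fin (n / 2) ⊕ Fin (n / 2) ≃ Fin n := finSumFinEquiv.trans (finCongr (by omega))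
    let γ : Equiv.Perm (Fin n) :=
      e.permCongr (Equiv.sumComm (Fin (n / 2)) (Fin (n / 2)))
    let A' : Finset (Equiv.Perm (Fin n)) :=
      (Finset.univ ×ˢ A).image fun st => e.permCongr (Equiv.sumCongr st.1 (st.1⁻¹ * st.2))
    IsIndep (A' ∪ A'.image (fun τ => γ * τ)) ∧
    (∀ τ ∈ A' ∪ A'.image (fun τ => γ * τ), Equiv.Perm.sign τ = 1) ∧
    (A' ∪ A'.image (fun τ => γ * τ)).card = 2 * (n / 2).factorial * A.card := by
  intro e γ A'
  have hγ : γ = e.permCongr (Equiv.sumComm (Fin (n / 2)) (Fin (n / 2))) := rfl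
  have hA'def : A' = (Finset.univ ×ˢ A).image
      (fun st => e.permCongr (Equiv.sumCongr st.1 (st.1⁻¹ * st.2))) := rfl
  have hmeven : Even (n / 2) := by
    obtain ⟨k, rfl⟩ := hn4; exact ⟨k, by omega⟩
  have hcardm : Fintype.card (Fin (n / 2)) = n / 2 := Fintype.card_fin _
  have hmeven' : Even (Fintype.card (Fin (n / 2))) := by rw [hcardm]; exact hmeven
  have hs_sign : Equiv.Perm.sign
      (Equiv.sumComm (Fin (n / 2)) (Fin (n / 2)) : Equiv.Perm (Fin (n / 2) ⊕ Fin (n / 2))) = 1 := by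
    rw [sign_sumComm, hcardm]; exact Even.neg_one_pow hmeven
  -- membership characterization
  have key : ∀ x ∈ A' ∪ A'.image (fun τ => γ * τ),
      ∃ (c : Equiv.Perm (Fin (n / 2) ⊕ Fin (n / 2))) (σ τ : Equiv.Perm (Fin (n / 2))),
        (c = 1 ∨ c = Equiv.sumComm (Fin (n / 2)) (Fin (n / 2))) ∧ τ ∈ A ∧
          x = e.permCongr (c * Equiv.sumCongr σ (σ⁻¹ * τ)) := by
    intro x hx
    rcases Finset.mem_union.mp hx with hx | hx
    · obtain ⟨⟨σ, τ⟩, hst, rfl⟩ := Finset.mem_image.mp hx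
      exact ⟨1, σ, τ, Or.inl rfl, (Finset.mem_product.mp hst).2, by rw [one_mul]⟩
    · obtain ⟨y, hy, rfl⟩ := Finset.mem_image.mp hx
      obtain ⟨⟨σ, τ⟩, hst, rfl⟩ := Finset.mem_image.mp hy
      refine ⟨_, σ, τ, Or.inr rfl, (Finset.mem_product.mp hst).2, ?_⟩
      rw [hγ, _root_.permCongr_mul]
  refine ⟨?_, ?_, ?_⟩
  · -- independence
    intro x hx y hy hcyc
    obtain ⟨c₁, σ₁, τ₁, hc₁, ht₁, rfl⟩ := key x hx
    obtain ⟨c₂, σ₂, τ₂, hc₂, ht₂, rfl⟩ := key y hy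
    rw [permCongr_inv, _root_.permCongr_mul] at hcyc
    have hq := isCycle_permCongr e hcyc
    have hD : Equiv.sumCongr σ₁ (σ₁⁻¹ * τ₁) * (Equiv.sumCongr σ₂ (σ₂⁻¹ * τ₂))⁻¹
        = Equiv.sumCongr (σ₁ * σ₂⁻¹) (σ₁⁻¹ * (τ₁ * τ₂⁻¹) * σ₂) := by
      rw [Equiv.Perm.sumCongr_inv, Equiv.Perm.sumCongr_mul]
      congr 1
    have hne := hind τ₁ ht₁ τ₂ ht₂
    have hsgnblock : Equiv.Perm.sign (σ₁ * σ₂⁻¹) *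
        Equiv.Perm.sign (σ₁⁻¹ * (τ₁ * τ₂⁻¹) * σ₂) = 1 := by
      rcases Int.units_eq_one_or (Equiv.Perm.sign σ₁) with h1 | h1 <;>
        rcases Int.units_eq_one_or (Equiv.Perm.sign σ₂) with h2 | h2 <;>
        simp [map_mul, Equiv.Perm.sign_inv, h1, h2, hsign _ ht₁, hsign _ ht₂]
    rcases hc₁ with rfl | rfl <;> rcases hc₂ with rfl | rfl
    · rw [one_mul, one_mul, hD] at hq
      exact (block_not_cycle hne).1 hq
    · rw [one_mul, mul_inv_rev, sumComm_inv, ← mul_assoc, hD] at hq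
      exact (mixed_not_cycle hmeven' hsgnblock).1 hq
    · rw [one_mul, mul_assoc, hD] at hq
      exact (mixed_not_cycle hmeven' hsgnblock).2 hq
    · rw [mul_inv_rev, sumComm_inv] at hq
      have hrw : Equiv.sumComm (Fin (n / 2)) (Fin (n / 2)) * Equiv.sumCongr σ₁ (σ₁⁻¹ * τ₁) *
          ((Equiv.sumCongr σ₂ (σ₂⁻¹ * τ₂))⁻¹ * Equiv.sumComm (Fin (n / 2)) (Fin (n / 2)))
          = Equiv.sumComm (Fin (n / 2)) (Fin (n / 2)) *
            Equiv.sumCongr (σ₁ * σ₂⁻¹) (σ₁⁻¹ * (τ₁ * τ₂⁻¹) * σ₂) *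
            Equiv.sumComm (Fin (n / 2)) (Fin (n / 2)) := by
        rw [← hD]; group
      rw [hrw, sumComm_conj] at hq
      exact (block_not_cycle hne).2 hq
  · -- signs
    intro x hx
    obtain ⟨c, σ, τ₀, hc, ht, rfl⟩ := key x hx
    rw [Equiv.Perm.sign_permCongr, map_mul, Equiv.Perm.sign_sumCongr]
    have hcsign : Equiv.Perm.sign c = 1 := by
      rcases hc with rfl | rfl
      · simp
      · exact hs_sign
    rcases Int.units_eq_one_or (Equiv.Perm.sign σ) with h1 | h1 <;>
      simp [hcsign, map_mul, Equiv.Perm.sign_inv, h1, hsign _ ht]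
  · -- cardinality
    have j0 : Fin (n / 2) := ⟨0, by omega⟩
    have hdisj : Disjoint A' (A'.image (fun τ => γ * τ)) := by
      rw [Finset.disjoint_left]
      intro x hx hx'
      rw [hA'def] at hx hx'
      obtain ⟨⟨σ₁, τ₁⟩, h1, rfl⟩ := Finset.mem_image.mp hx
      obtain ⟨y, hy, heq⟩ := Finset.mem_image.mp hx'
      obtain ⟨⟨σ₂, τ₂⟩, h2, rfl⟩ := Finset.mem_image.mp hy
      rw [hγ, _root_.permCongr_mul] at heq
      have heq2 := e.permCongr.injective heq
      have := Equiv.ext_iff.mp heq2 (Sum.inl j0)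
      simp [Equiv.Perm.mul_apply] at this
    have hinj : Set.InjOn
        (fun st : Equiv.Perm (Fin (n / 2)) × Equiv.Perm (Fin (n / 2)) =>
          e.permCongr (Equiv.sumCongr st.1 (st.1⁻¹ * st.2)))
        (((Finset.univ ×ˢ A : Finset (Equiv.Perm (Fin (n / 2)) × Equiv.Perm (Fin (n / 2)))) : Finset _) : Set _) := by
      rintro ⟨σ₁, τ₁⟩ _ ⟨σ₂, τ₂⟩ _ h
      have h' := e.permCongr.injective h
      have hσ : σ₁ = σ₂ := by
        ext j
        have := Equiv.ext_iff.mp h' (Sum.inl j)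
        simp at this
        exact congrArg Fin.val this
      subst hσ
      have hτ : τ₁ = τ₂ := by
        ext j
        have := Equiv.ext_iff.mp h' (Sum.inr j)
        simp [Equiv.Perm.mul_apply] at this
        exact congrArg Fin.val this
      simp [hτ]
    have hA'card : A'.card = (n / 2).factorial * A.card := by
      rw [hA'def, Finset.card_image_of_injOn hinj, Finset.card_product, Finset.card_univ,
        Fintype.card_perm, Fintype.card_fin]
    rw [Finset.card_union_of_disjoint hdisj,
      Finset.card_image_of_injective _ (mul_right_injective γ), hA'card]
    ring
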